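/- (Corollary 1, minimality of ε^c.) Let A ⊆ X with p(A) > 0 and p(A|s) > 0 for all s ∈ S, and set ε^c = max_{s∈S} |log(p(A|s)/p(A))|. Then for every randomization Q on A there exist s ∈ S and y ∈ A with p_Y(y) > 0 such that p_Y(y|s) ≥ e^{ε^c} p_Y(y) or p_Y(y|s) ≤ e^{-ε^c} p_Y(y); that is, no randomization of A can attain an absolute log-lift bound strictly smaller than ε^c on every output pair. -/
import Mathlib


/-- Corollary 1, minimality of `ε^c`: with
`ε^c = max_{s∈S} |log(p(A|s)/p(A))|`, for every randomization `Q` on `A` there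
exist `s ∈ S` and `y ∈ A` with `p_Y(y) > 0` such that
`p_Y(y|s) ≥ e^{ε^c} p_Y(y)` or `p_Y(y|s) ≤ e^{-ε^c} p_Y(y)`. -/
theorem stmt_3 {S X : Type*} [Fintype S] [Fintype X] [Nonempty S] [Nonempty X]
    (p : S → X → ℝ)
    (hp_nonneg : ∀ s x, 0 ≤ p s x)
    (hp_sum : ∑ s, ∑ x, p s x = 1)
    (pS : S → ℝ) (hpS : ∀ s, pS s = ∑ x, p s x)
    (pX : X → ℝ) (hpX : ∀ x, pX x = ∑ s, p s x)
    (hpS_pos : ∀ s, 0 < pS s)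
    (pXgS : S → X → ℝ) (hpXgS : ∀ s x, pXgS s x = p s x / pS s)
    (A : Finset X)
    (pA : ℝ) (hpA : pA = ∑ x ∈ A, pX x)
    (pAgS : S → ℝ) (hpAgS : ∀ s, pAgS s = ∑ x ∈ A, pXgS s x)
    (hA_pos : 0 < pA) (hAgS_pos : ∀ s, 0 < pAgS s)
    (εc : ℝ)
    (hεc : εc = Finset.univ.sup' Finset.univ_nonempty
      (fun s : S => |Real.log (pAgS s / pA)|))
    (Q : X → X → ℝ)
    (hQ_nonneg : ∀ x ∈ A, ∀ y ∈ A, 0 ≤ Q x y)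
    (hQ_sum : ∀ x ∈ A, ∑ y ∈ A, Q x y = 1)
    (pY : X → ℝ) (hpY : ∀ y, pY y = ∑ x ∈ A, Q x y * pX x)
    (pYgS : S → X → ℝ) (hpYgS : ∀ s y, pYgS s y = ∑ x ∈ A, Q x y * pXgS s x) :
    ∃ s : S, ∃ y ∈ A, 0 < pY y ∧
      (Real.exp εc * pY y ≤ pYgS s y ∨ pYgS s y ≤ Real.exp (-εc) * pY y) := by

  have hpX_nonneg : ∀ x, 0 ≤ pX x := fun x => by
    rw [hpX]; exact Finset.sum_nonneg fun s _ => hp_nonneg s x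
  have hpXgS_nonneg : ∀ s x, 0 ≤ pXgS s x := fun s x => by
    rw [hpXgS]; exact div_nonneg (hp_nonneg s x) (hpS_pos s).le
  have hpY_nonneg : ∀ y ∈ A, 0 ≤ pY y := fun y hy => by
    rw [hpY]
    exact Finset.sum_nonneg fun x hx => mul_nonneg (hQ_nonneg x hx y hy) (hpX_nonneg x)
  have hsum_pY : ∑ y ∈ A, pY y = pA := by
    simp_rw [hpY, hpA]
    rw [Finset.sum_comm]
    refine Finset.sum_congr rfl fun x hx => ?_
    rw [← Finset.sum_mul, hQ_sum x hx, one_mul]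
  have hsum_pYgS : ∀ s, ∑ y ∈ A, pYgS s y = pAgS s := by
    intro s
    simp_rw [hpYgS, hpAgS]
    rw [Finset.sum_comm]
    refine Finset.sum_congr rfl fun x hx => ?_
    rw [← Finset.sum_mul, hQ_sum x hx, one_mul]
  have hzero : ∀ y ∈ A, pY y = 0 → ∀ s, pYgS s y = 0 := by
    intro y hy h0 s
    rw [hpY] at h0
    have hterms : ∀ x ∈ A, Q x y * pX x = 0 := fun x hx =>
      (Finset.sum_eq_zero_iff_of_nonneg
        (fun x hx => mul_nonneg (hQ_nonneg x hx y hy) (hpX_nonneg x))).1 h0 x hx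
    rw [hpYgS]
    apply Finset.sum_eq_zero
    intro x hx
    rcases mul_eq_zero.1 (hterms x hx) with hQ0 | hpx0
    · rw [hQ0, zero_mul]
    · have hle : p s x ≤ pX x := by
        rw [hpX]; exact Finset.single_le_sum (fun s' _ => hp_nonneg s' x) (Finset.mem_univ s)
      have : p s x = 0 := le_antisymm (hpx0 ▸ hle) (hp_nonneg s x)
      rw [hpXgS, this, zero_div, mul_zero]
  obtain ⟨s', -, hs'⟩ := Finset.exists_mem_eq_sup' (Finset.univ_nonempty (α := S))
      (fun s : S => |Real.log (pAgS s / pA)|)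
  have hεc' : εc = |Real.log (pAgS s' / pA)| := by rw [hεc, hs']
  have hratio_pos : 0 < pAgS s' / pA := div_pos (hAgS_pos s') hA_pos
  set B : Finset X := A.filter (fun y => 0 < pY y) with hB
  have hBsub : B ⊆ A := Finset.filter_subset _ _
  have hBne : B.Nonempty := by
    by_contra hne
    rw [Finset.not_nonempty_iff_eq_empty] at hne
    have : ∑ y ∈ A, pY y = 0 := by
      apply Finset.sum_eq_zero
      intro y hy
      by_contra hyz
      have : y ∈ B := Finset.mem_filter.2 ⟨hy, lt_of_le_of_ne (hpY_nonneg y hy) (Ne.symm hyz)⟩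
      simp [hne] at this
    rw [hsum_pY] at this
    exact absurd this (ne_of_gt hA_pos)
  have hzero' : ∀ y ∈ A, y ∉ B → pY y = 0 := by
    intro y hy hyB
    by_contra hyz
    exact hyB (Finset.mem_filter.2 ⟨hy, lt_of_le_of_ne (hpY_nonneg y hy) (Ne.symm hyz)⟩)
  have hsumB : ∀ c : ℝ, ∑ y ∈ B, (pYgS s' y - c * pY y) = pAgS s' - c * pA := by
    intro c
    have hext : ∑ y ∈ B, (pYgS s' y - c * pY y) = ∑ y ∈ A, (pYgS s' y - c * pY y) := by
      apply Finset.sum_subset hBsub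
      intro y hy hyB
      rw [hzero' y hy hyB, hzero y hy (hzero' y hy hyB) s', mul_zero, sub_zero]
    rw [hext, Finset.sum_sub_distrib, hsum_pYgS, ← Finset.mul_sum, hsum_pY]
  rcases le_or_gt 0 (Real.log (pAgS s' / pA)) with hL | hL
  · -- εc = log ratio, use left disjunct
    have hc : Real.exp εc = pAgS s' / pA := by
      rw [hεc', abs_of_nonneg hL, Real.exp_log hratio_pos]
    have hcpA : Real.exp εc * pA = pAgS s' := by
      rw [hc, div_mul_cancel₀ _ (ne_of_gt hA_pos)]
    have hsum0 : ∑ y ∈ B, (pYgS s' y - Real.exp εc * pY y) = 0 := by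
      rw [hsumB, hcpA, sub_self]
    have h0le : ∑ y ∈ B, (0 : ℝ) ≤ ∑ y ∈ B, (pYgS s' y - Real.exp εc * pY y) := by
      rw [hsum0, Finset.sum_const_zero]
    obtain ⟨y, hyB, hy⟩ := Finset.exists_le_of_sum_le hBne h0le
    obtain ⟨hyA, hypos⟩ := Finset.mem_filter.1 hyB
    exact ⟨s', y, hyA, hypos, Or.inl (by linarith)⟩
  · -- εc = -log ratio, use right disjunct
    have hc : Real.exp (-εc) = pAgS s' / pA := by
      rw [hεc', abs_of_neg hL, neg_neg, Real.exp_log hratio_pos]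
    have hcpA : Real.exp (-εc) * pA = pAgS s' := by
      rw [hc, div_mul_cancel₀ _ (ne_of_gt hA_pos)]
    have hsum0 : ∑ y ∈ B, (Real.exp (-εc) * pY y - pYgS s' y) = 0 := by
      have := hsumB (Real.exp (-εc))
      have h2 : ∑ y ∈ B, (Real.exp (-εc) * pY y - pYgS s' y)
          = -∑ y ∈ B, (pYgS s' y - Real.exp (-εc) * pY y) := by
        rw [← Finset.sum_neg_distrib]
        exact Finset.sum_congr rfl fun y _ => by ring
      rw [h2, this, hcpA, sub_self, neg_zero]
    have h0le : ∑ y ∈ B, (0 : ℝ) ≤ ∑ y ∈ B, (Real.exp (-εc) * pY y - pYgS s' y) := by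
      rw [hsum0, Finset.sum_const_zero]
    obtain ⟨y, hyB, hy⟩ := Finset.exists_le_of_sum_le hBne h0le
    obtain ⟨hyA, hypos⟩ := Finset.mem_filter.1 hyB
    exact ⟨s', y, hyA, hypos, Or.inr (by linarith)⟩
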